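/- Let v¹,…,vⁿ be an orthonormal basis of ℝⁿ, α₁,…,αₙ > 0, and λ ∈ [0,1]. For a ∈ ℝⁿ: (∑ᵢ αᵢ^(2λ)⟨a,vⁱ⟩²)^(1/2) ≤ (1-λ)(∑ᵢ ⟨a,vⁱ⟩²)^(1/2) + λ(∑ᵢ αᵢ²⟨a,vⁱ⟩²)^(1/2), and when λ ∈ (0,1) equality holds if and only if αᵢ = 1 for all i with ⟨a,vⁱ⟩ ≠ 0. -/

import Mathlib

open scoped RealInnerProductSpace

private lemma aux_le {α : ℝ} (hα : 0 < α) {l : ℝ} (hl0 : 0 ≤ l) (hl1 : l ≤ 1) :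
    α ^ l ≤ 1 - l + l * α := by
  have h := Real.geom_mean_le_arith_mean2_weighted (by linarith : (0:ℝ) ≤ 1 - l) hl0
    zero_le_one hα.le (by ring)
  simpa using h

private lemma aux_lt {α : ℝ} (hα : 0 < α) (hne : α ≠ 1) {l : ℝ} (hl0 : 0 < l) (hl1 : l < 1) :
    α ^ l < 1 - l + l * α := by
  have hlog : Real.log α ≠ 0 := by
    intro h
    rcases (Real.log_eq_zero).1 h with h' | h' | h' <;> [exact hα.ne' h'; exact hne h'; linarith]
  have h := strictConvexOn_exp.2 (Set.mem_univ (Real.log α)) (Set.mem_univ 0) hlog hl0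
    (by linarith : (0:ℝ) < 1 - l) (by ring)
  simp only [smul_eq_mul, mul_zero, add_zero, Real.exp_zero, mul_one, Real.exp_log hα] at h
  rw [Real.rpow_def_of_pos hα, mul_comm]
  linarith

theorem stmt_9 {n : ℕ} (v : Fin n → EuclideanSpace ℝ (Fin n))
    (hv : Orthonormal ℝ v) (hv' : Submodule.span ℝ (Set.range v) = ⊤)
    (α : Fin n → ℝ) (hα : ∀ i, 0 < α i) (l : ℝ) (hl : l ∈ Set.Icc (0:ℝ) 1)
    (a : EuclideanSpace ℝ (Fin n)) :
    Real.sqrt (∑ i, (α i) ^ (2 * l) * ⟪a, v i⟫ ^ 2) ≤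
      (1 - l) * Real.sqrt (∑ i, ⟪a, v i⟫ ^ 2) + l * Real.sqrt (∑ i, (α i) ^ 2 * ⟪a, v i⟫ ^ 2) ∧
    (l ∈ Set.Ioo (0:ℝ) 1 →
      (Real.sqrt (∑ i, (α i) ^ (2 * l) * ⟪a, v i⟫ ^ 2) =
        (1 - l) * Real.sqrt (∑ i, ⟪a, v i⟫ ^ 2) + l * Real.sqrt (∑ i, (α i) ^ 2 * ⟪a, v i⟫ ^ 2) ↔
        ∀ i, ⟪a, v i⟫ ≠ 0 → α i = 1)) := by
  obtain ⟨hl0, hl1⟩ := hl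
  set c : Fin n → ℝ := fun i => ⟪a, v i⟫ with hc
  -- rewrite first sum summands as squares
  have hsq : ∀ i, (α i) ^ (2 * l) * c i ^ 2 = ((α i ^ l) * c i) ^ 2 := by
    intro i
    rw [mul_pow, ← Real.rpow_natCast (α i ^ l) 2, ← Real.rpow_mul (hα i).le]
    norm_num [mul_comm]
  -- termwise bound
  have hterm : ∀ i, ((α i ^ l) * c i) ^ 2 ≤ ((1 - l + l * α i) * c i) ^ 2 := by
    intro i
    have h1 : 0 ≤ α i ^ l := Real.rpow_nonneg (hα i).le _
    have h2 := aux_le (hα i) hl0 hl1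
    rw [mul_pow, mul_pow]
    exact mul_le_mul_of_nonneg_right (pow_le_pow_left₀ h1 h2 2) (sq_nonneg _)
  set x : EuclideanSpace ℝ (Fin n) := WithLp.toLp 2 (fun i => c i) with hx
  set y : EuclideanSpace ℝ (Fin n) := WithLp.toLp 2 (fun i => α i * c i) with hy
  have hnx : ‖x‖ = Real.sqrt (∑ i, c i ^ 2) := by
    simp [EuclideanSpace.norm_eq, hx, sq_abs]
  have hny : ‖y‖ = Real.sqrt (∑ i, (α i) ^ 2 * c i ^ 2) := by
    simp [EuclideanSpace.norm_eq, hy, sq_abs, mul_pow]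
  have hnz : ‖(1 - l) • x + l • y‖ = Real.sqrt (∑ i, ((1 - l + l * α i) * c i) ^ 2) := by
    simp only [EuclideanSpace.norm_eq, PiLp.add_apply, PiLp.smul_apply, smul_eq_mul,
      Real.norm_eq_abs, sq_abs, hx, hy, PiLp.toLp_apply]
    congr 1
    apply Finset.sum_congr rfl
    intro i _
    ring
  have hmink : Real.sqrt (∑ i, ((1 - l + l * α i) * c i) ^ 2) ≤
      (1 - l) * Real.sqrt (∑ i, c i ^ 2) + l * Real.sqrt (∑ i, (α i) ^ 2 * c i ^ 2) := by
    rw [← hnx, ← hny, ← hnz]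
    calc ‖(1 - l) • x + l • y‖ ≤ ‖(1 - l) • x‖ + ‖l • y‖ := norm_add_le _ _
      _ = (1 - l) * ‖x‖ + l * ‖y‖ := by
          rw [norm_smul, norm_smul, Real.norm_eq_abs, Real.norm_eq_abs,
            abs_of_nonneg (by linarith), abs_of_nonneg hl0]
  have hstep1 : Real.sqrt (∑ i, (α i) ^ (2 * l) * c i ^ 2) ≤
      Real.sqrt (∑ i, ((1 - l + l * α i) * c i) ^ 2) := by
    apply Real.sqrt_le_sqrt
    rw [Finset.sum_congr rfl fun i _ => hsq i]
    exact Finset.sum_le_sum fun i _ => hterm i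
  refine ⟨hstep1.trans hmink, ?_⟩
  rintro ⟨hl0', hl1'⟩
  constructor
  · intro heq
    intro i hci
    by_contra hne
    -- strict termwise inequality at i
    have hstrict : ((α i ^ l) * c i) ^ 2 < ((1 - l + l * α i) * c i) ^ 2 := by
      have h1 : 0 ≤ α i ^ l := Real.rpow_nonneg (hα i).le _
      have h2 := aux_lt (hα i) hne hl0' hl1'
      have hc2 : 0 < c i ^ 2 := by positivity
      rw [mul_pow, mul_pow]
      exact mul_lt_mul_of_pos_right (pow_lt_pow_left₀ h2 h1 two_ne_zero) hc2
    have hlt : ∑ j, (α j) ^ (2 * l) * c j ^ 2 < ∑ j, ((1 - l + l * α j) * c j) ^ 2 := by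
      rw [Finset.sum_congr rfl fun j _ => hsq j]
      exact Finset.sum_lt_sum (fun j _ => hterm j) ⟨i, Finset.mem_univ i, hstrict⟩
    have hsqrtlt : Real.sqrt (∑ j, (α j) ^ (2 * l) * c j ^ 2) <
        Real.sqrt (∑ j, ((1 - l + l * α j) * c j) ^ 2) := by
      apply Real.sqrt_lt_sqrt _ hlt
      apply Finset.sum_nonneg
      intro j _
      have : 0 ≤ (α j) ^ (2 * l) := Real.rpow_nonneg (hα j).le _
      positivity
    linarith [hsqrtlt.trans_le hmink, heq.ge]
  · intro h1
    have hsame : ∀ i, (α i) ^ (2 * l) * c i ^ 2 = c i ^ 2 ∧ (α i) ^ 2 * c i ^ 2 = c i ^ 2 := by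
      intro i
      by_cases hci : c i = 0
      · simp [hci]
      · have := h1 i hci
        simp [this]
    have e1 : (∑ i, (α i) ^ (2 * l) * c i ^ 2) = ∑ i, c i ^ 2 :=
      Finset.sum_congr rfl fun i _ => (hsame i).1
    have e2 : (∑ i, (α i) ^ 2 * c i ^ 2) = ∑ i, c i ^ 2 :=
      Finset.sum_congr rfl fun i _ => (hsame i).2
    rw [e1, e2]
    ring
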